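/- arXiv:1211.0386 — 2 statements merged into one kernel-verified Lean document; each statement's English description precedes it below -/
import Mathlib

section
/- Let D = (d_{ij}) be an n×n nonnegative matrix (n ≥ 2) with all row sums and column sums equal to n, and let Λ_D be the D-type map Λ_D(A) = diag(∑_k a_{kk} d_{k1}, …, ∑_k a_{kk} d_{kn}) − A. Then the following are equivalent: (a) Λ_D is completely positive; (b) Λ_D is 2-positive; (c) D = n I_n. -/
open Matrix ComplexOrder Real

lemma stmt17_sum3 {i1 i2 i3 : Type*} [Fintype i1] [Fintype i2] [Fintype i3] (f : i1 → i2 → i3 → ℂ) :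
    ∑ a, ∑ b, ∑ c, f a b c = ∑ c, ∑ a, ∑ b, f a b c :=
  calc ∑ a, ∑ b, ∑ c, f a b c = ∑ a, ∑ c, ∑ b, f a b c :=
        Finset.sum_congr rfl (fun _ _ => Finset.sum_comm)
    _ = ∑ c, ∑ a, ∑ b, f a b c := Finset.sum_comm

lemma stmt17_sum4 {i1 i2 i3 i4 : Type*} [Fintype i1] [Fintype i2] [Fintype i3] [Fintype i4]
    (f : i1 → i2 → i3 → i4 → ℂ) :
    ∑ a, ∑ b, ∑ c, ∑ e, f a b c e = ∑ b, ∑ e, ∑ a, ∑ c, f a b c e := by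
  rw [Finset.sum_comm]
  exact Finset.sum_congr rfl fun x _ => stmt17_sum3 _

lemma stmt17_cs {n : ℕ} (w : Fin n → ℂ) :
    Complex.normSq (∑ j, w j) ≤ n * ∑ j, Complex.normSq (w j) := by
  have h1 : ‖∑ j, w j‖ ≤ ∑ j, ‖w j‖ := by
    simpa using norm_sum_le Finset.univ w
  have h2 : (‖∑ j, w j‖)^2 ≤ (∑ j, ‖w j‖)^2 :=
    pow_le_pow_left₀ (by positivity) h1 2
  have h3 : (∑ j, ‖w j‖)^2 ≤ (∑ j : Fin n, (1:ℝ)^2) * (∑ j, ‖w j‖ ^2) := by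
    simpa using Finset.sum_mul_sq_le_sq_mul_sq Finset.univ (fun _ => (1:ℝ)) (fun j => ‖w j‖)
  calc Complex.normSq (∑ j, w j) = (‖∑ j, w j‖)^2 := (Complex.sq_norm _).symm
    _ ≤ (∑ j, ‖w j‖)^2 := h2
    _ ≤ (∑ j : Fin n, (1:ℝ)^2) * (∑ j, ‖w j‖ ^2) := h3
    _ = n * ∑ j, Complex.normSq (w j) := by simp [Complex.sq_norm]

lemma stmt17_cos {n : ℕ} (i k : Fin n) (hik : i ≠ k) :
    Real.cos (π * i / n - π * k / n) ^ 2 < 1 := by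
  have hn : (0:ℝ) < n := by exact_mod_cast Fin.pos i
  have ht : (i:ℝ) - k ≠ 0 := by
    have : (i:ℝ) ≠ (k:ℝ) := by exact_mod_cast fun h => hik (Fin.ext h)
    intro h; apply this; linarith
  have htb : |(i:ℝ) - k| < n := by
    have h1 : (i:ℝ) < n := by exact_mod_cast i.isLt
    have h2 : (k:ℝ) < n := by exact_mod_cast k.isLt
    have h3 : (0:ℝ) ≤ i := by positivity
    have h4 : (0:ℝ) ≤ k := by positivity
    rw [abs_lt]; constructor <;> linarith
  set y : ℝ := π * i / n - π * k / n with hy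
  have hye : y = π * ((i:ℝ) - k) / n := by rw [hy]; ring
  have h2y : Real.cos (2 * y) < 1 := by
    refine lt_of_le_of_ne (Real.cos_le_one (2*y)) ?_
    intro hone
    have hb1 : -(2*π) < 2*y := by
      rw [hye]
      have := abs_lt.mp htb
      have hπ := Real.pi_pos
      rw [neg_lt]
      calc -(2 * (π * ((i:ℝ)-k) / n)) = 2 * (π * (-((i:ℝ)-k)) / n) := by ring
        _ < 2 * π := by
          rw [mul_lt_mul_iff_right₀ (by norm_num : (0:ℝ) < 2)]
          rw [div_lt_iff₀ hn]
          have : -((i:ℝ)-k) < n := by linarith [this.1]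
          nlinarith
    have hb2 : 2*y < 2*π := by
      rw [hye]
      have := abs_lt.mp htb
      have hπ := Real.pi_pos
      rw [mul_lt_mul_iff_right₀ (by norm_num : (0:ℝ) < 2)]
      rw [div_lt_iff₀ hn]
      nlinarith [this.2]
    have := (Real.cos_eq_one_iff_of_lt_of_lt hb1 hb2).mp hone
    have : y = 0 := by linarith
    rw [hye] at this
    have hπ := Real.pi_ne_zero
    field_simp at this
    rw [mul_zero] at this; exact mul_ne_zero hπ ht this
  rw [Real.cos_sq]
  linarith

set_option maxHeartbeats 1600000 in
/-- for a nonnegative `D` with all row and column sums `n`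
(`n ≥ 2`), the `D`-type map `Λ_D` is completely positive iff it is 2-positive
iff `D = nI`. -/
theorem stmt_17 {n : ℕ} (hn : 2 ≤ n) (d : Fin n → Fin n → ℝ)
    (hd : ∀ i j, 0 ≤ d i j)
    (hrow : ∀ i, ∑ j, d i j = n) (hcol : ∀ j, ∑ i, d i j = n)
    (L : Matrix (Fin n) (Fin n) ℂ → Matrix (Fin n) (Fin n) ℂ)
    (hL : ∀ A, L A = Matrix.diagonal (fun j => ∑ i, (d i j : ℂ) * A i i) - A) :
    List.TFAE
      [ (∀ k : ℕ, ∀ A : Matrix (Fin k × Fin n) (Fin k × Fin n) ℂ,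
          A.PosSemidef →
          (Matrix.of fun u v : Fin k × Fin n =>
            L (Matrix.of fun a b => A (u.1, a) (v.1, b)) u.2 v.2).PosSemidef),
        (∀ A : Matrix (Fin 2 × Fin n) (Fin 2 × Fin n) ℂ, A.PosSemidef →
          (Matrix.of fun u v : Fin 2 × Fin n =>
            L (Matrix.of fun a b => A (u.1, a) (v.1, b)) u.2 v.2).PosSemidef),
        (∀ i j, d i j = if i = j then (n : ℝ) else 0) ] := by
  tfae_have 1 → 2 := fun h => h 2
  tfae_have 2 → 3 := by
    intro h2
    set θ : Fin n → ℝ := fun i => π * i / n with hθ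
    set v : Fin 2 × Fin n → ℝ := fun p => if p.1 = 0 then Real.cos (θ p.2) else Real.sin (θ p.2)
      with hv
    set x : Fin 2 × Fin n → ℂ := fun p => ((v p : ℝ) : ℂ) with hx
    have hxreal : ∀ p, star (x p) = x p := by intro p; simp [hx, Complex.conj_ofReal]
    set A : Matrix (Fin 2 × Fin n) (Fin 2 × Fin n) ℂ := Matrix.of fun p q => x p * x q with hA
    have hApsd : A.PosSemidef := by
      refine Matrix.PosSemidef.of_dotProduct_mulVec_nonneg ?_ ?_
      · show _ = _
        ext p q
        simp only [Matrix.conjTranspose_apply, hA, Matrix.of_apply, star_mul', hxreal]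
        ring
      · intro w
        have e : star w ⬝ᵥ A *ᵥ w = star (∑ q, x q * w q) * (∑ q, x q * w q) := by
          simp only [dotProduct, mulVec, hA, Matrix.of_apply, Pi.star_apply, Finset.mul_sum,
            star_sum, star_mul', hxreal, Finset.sum_mul]
          rw [Finset.sum_comm]
          apply Finset.sum_congr rfl; intro p _
          apply Finset.sum_congr rfl; intro q _
          ring
        rw [e]
        exact star_mul_self_nonneg _
    have hB := h2 A hApsd
    have hQ := hB.dotProduct_mulVec_nonneg x
    have hBapp : ∀ p q : Fin 2 × Fin n,
        (Matrix.of fun u v : Fin 2 × Fin n =>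
          L (Matrix.of fun a b => A (u.1, a) (v.1, b)) u.2 v.2) p q
        = (if p.2 = q.2 then ∑ m, (d m p.2 : ℂ) * (x (p.1, m) * x (q.1, m)) else 0)
          - x p * x q := by
      intro p q
      simp only [Matrix.of_apply, hL, Matrix.sub_apply, Matrix.diagonal_apply, Matrix.of_apply]
      congr 1
    set g : Fin n → Fin n → ℂ := fun i m => ∑ c : Fin 2, x (c, i) * x (c, m) with hg
    have hgc : ∀ i m, g i m = ((Real.cos (θ i - θ m) : ℝ) : ℂ) := by
      intro i m
      simp only [hg, Fin.sum_univ_two, hx, hv]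
      norm_num
      rw [Complex.cos_sub]
    have hone : ∀ i : Fin n, (∑ c : Fin 2, x (c,i) * x (c,i)) = 1 := by
      intro i
      simp only [Fin.sum_univ_two, hx, hv]
      norm_num
      norm_cast
      rw [← sq, ← sq, Real.cos_sq_add_sin_sq]
    have sumxx : ∑ p : Fin 2 × Fin n, x p * x p = (n:ℂ) := by
      rw [Fintype.sum_prod_type, Finset.sum_comm]
      simp only [hone]
      simp
    have hQval : star x ⬝ᵥ (Matrix.of fun u v : Fin 2 × Fin n =>
          L (Matrix.of fun a b => A (u.1, a) (v.1, b)) u.2 v.2) *ᵥ x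
        = (∑ i, ∑ m, (d m i : ℂ) * g i m * g i m) - ((n:ℂ) * (n:ℂ)) := by
      have q1 : star x ⬝ᵥ (Matrix.of fun u v : Fin 2 × Fin n =>
            L (Matrix.of fun a b => A (u.1, a) (v.1, b)) u.2 v.2) *ᵥ x
          = (∑ p, ∑ q, x p * ((if p.2 = q.2 then
              ∑ m, (d m p.2 : ℂ) * (x (p.1, m) * x (q.1, m)) else 0) * x q))
            - ∑ p, ∑ q, x p * (x p * x q * x q) := by
        simp only [dotProduct, mulVec, Pi.star_apply, hxreal, Finset.mul_sum, hBapp, sub_mul,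
          mul_sub, Finset.sum_sub_distrib]
      rw [q1]
      congr 1
      · -- the quadratic d-term
        calc ∑ p, ∑ q, x p * ((if p.2 = q.2 then
              ∑ m, (d m p.2 : ℂ) * (x (p.1, m) * x (q.1, m)) else 0) * x q)
            = ∑ c : Fin 2, ∑ i : Fin n, ∑ e : Fin 2, ∑ j : Fin n, x (c,i) * ((if i = j then
              ∑ m, (d m i : ℂ) * (x (c, m) * x (e, m)) else 0) * x (e,j)) := by
              rw [Fintype.sum_prod_type]
              apply Finset.sum_congr rfl; intro c _
              apply Finset.sum_congr rfl; intro i _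
              rw [Fintype.sum_prod_type]
          _ = ∑ c : Fin 2, ∑ i : Fin n, ∑ e : Fin 2,
                x (c,i) * ((∑ m, (d m i : ℂ) * (x (c, m) * x (e, m))) * x (e,i)) := by
              apply Finset.sum_congr rfl; intro c _
              apply Finset.sum_congr rfl; intro i _
              apply Finset.sum_congr rfl; intro e _
              simp [mul_ite, ite_mul, Finset.sum_ite_eq]
          _ = ∑ c : Fin 2, ∑ i : Fin n, ∑ e : Fin 2, ∑ m : Fin n,
                (d m i : ℂ) * (x (c,i) * x (c,m)) * (x (e,i) * x (e,m)) := by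
              apply Finset.sum_congr rfl; intro c _
              apply Finset.sum_congr rfl; intro i _
              apply Finset.sum_congr rfl; intro e _
              rw [Finset.sum_mul, Finset.mul_sum]
              apply Finset.sum_congr rfl; intro m _
              ring
          _ = ∑ i : Fin n, ∑ m : Fin n, ∑ c : Fin 2, ∑ e : Fin 2,
                (d m i : ℂ) * (x (c,i) * x (c,m)) * (x (e,i) * x (e,m)) := stmt17_sum4 _
          _ = ∑ i, ∑ m, (d m i : ℂ) * g i m * g i m := by
              apply Finset.sum_congr rfl; intro i _
              apply Finset.sum_congr rfl; intro m _
              show ∑ c : Fin 2, ∑ e : Fin 2, (d m i : ℂ) * (x (c,i) * x (c,m)) * (x (e,i) * x (e,m))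
                = (d m i : ℂ) * (∑ c : Fin 2, x (c, i) * x (c, m)) * (∑ e : Fin 2, x (e, i) * x (e, m))
              rw [mul_assoc, Finset.sum_mul_sum, Finset.mul_sum]
              apply Finset.sum_congr rfl; intro c _
              rw [Finset.mul_sum]
              apply Finset.sum_congr rfl; intro e _
              ring
      · -- the -n² term
        rw [show ∑ p, ∑ q, x p * (x p * x q * x q)
            = (∑ p : Fin 2 × Fin n, x p * x p) * (∑ q : Fin 2 × Fin n, x q * x q) by
          rw [Finset.sum_mul_sum]
          apply Finset.sum_congr rfl; intro p _
          apply Finset.sum_congr rfl; intro q _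
          ring]
        rw [sumxx]
    -- extract the real inequality
    set T : ℝ := ∑ i, ∑ m, d m i * (Real.cos (θ i - θ m))^2 with hT
    have hTQ : star x ⬝ᵥ (Matrix.of fun u v : Fin 2 × Fin n =>
          L (Matrix.of fun a b => A (u.1, a) (v.1, b)) u.2 v.2) *ᵥ x
        = ((T - (n:ℝ)*(n:ℝ) : ℝ) : ℂ) := by
      rw [hQval, hT]
      push_cast
      congr 1
      apply Finset.sum_congr rfl; intro i _
      apply Finset.sum_congr rfl; intro m _
      rw [hgc]
      push_cast
      ring
    rw [hTQ, Complex.zero_le_real] at hQ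
    have hTle : T ≤ (n:ℝ)*(n:ℝ) := by
      have : ∀ i : Fin n, ∑ m, d m i * (Real.cos (θ i - θ m))^2 ≤ ∑ m, d m i := by
        intro i
        apply Finset.sum_le_sum
        intro m _
        have h1 : (Real.cos (θ i - θ m))^2 ≤ 1 := by
          rw [← Real.sin_sq_add_cos_sq (θ i - θ m)]
          nlinarith [sq_nonneg (Real.sin (θ i - θ m))]
        nlinarith [hd m i]
      calc T ≤ ∑ i : Fin n, ∑ m, d m i := Finset.sum_le_sum (fun i _ => this i)
        _ = ∑ i : Fin n, (n:ℝ) := Finset.sum_congr rfl (fun i _ => hcol i)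
        _ = (n:ℝ)*(n:ℝ) := by simp [mul_comm]
    have hTeq : ∑ i : Fin n, ∑ m, (d m i - d m i * (Real.cos (θ i - θ m))^2) = 0 := by
      have expand : ∑ i : Fin n, ∑ m, (d m i - d m i * (Real.cos (θ i - θ m))^2)
          = (∑ i : Fin n, ∑ m, d m i) - T := by
        rw [hT, ← Finset.sum_sub_distrib]
        apply Finset.sum_congr rfl; intro i _
        rw [← Finset.sum_sub_distrib]
      rw [expand]
      have : ∑ i : Fin n, ∑ m, d m i = (n:ℝ)*(n:ℝ) := by
        calc ∑ i : Fin n, ∑ m, d m i = ∑ i : Fin n, (n:ℝ) :=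
              Finset.sum_congr rfl (fun i _ => hcol i)
          _ = (n:ℝ)*(n:ℝ) := by simp [mul_comm]
      rw [this]
      linarith
    have hterm : ∀ i m : Fin n, d m i - d m i * (Real.cos (θ i - θ m))^2 = 0 := by
      have hnn : ∀ i m : Fin n, 0 ≤ d m i - d m i * (Real.cos (θ i - θ m))^2 := by
        intro i m
        have h1 : (Real.cos (θ i - θ m))^2 ≤ 1 := by
          rw [← Real.sin_sq_add_cos_sq (θ i - θ m)]
          nlinarith [sq_nonneg (Real.sin (θ i - θ m))]
        nlinarith [hd m i]
      have houter : ∀ i ∈ Finset.univ, (∑ m, (d m i - d m i * (Real.cos (θ i - θ m))^2)) = 0 :=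
        (Finset.sum_eq_zero_iff_of_nonneg (fun i _ =>
          Finset.sum_nonneg (fun m _ => hnn i m))).mp hTeq
      intro i m
      exact (Finset.sum_eq_zero_iff_of_nonneg (fun m _ => hnn i m)).mp
        (houter i (Finset.mem_univ i)) m (Finset.mem_univ m)
    -- conclude
    intro i j
    rcases eq_or_ne i j with h | h
    · subst h
      rw [if_pos rfl]
      have := hrow i
      rw [Finset.sum_eq_single i] at this
      · exact this
      · intro j _ hji
        have hz := hterm j i
        have hc := stmt17_cos j i (fun hh => hji (hh ▸ rfl))
        rw [hθ] at hz
        simp only at hz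
        rcases mul_eq_zero.mp (by nlinarith : d i j * (1 - Real.cos (π * j / n - π * i / n)^2) = 0) with h0 | h0
        · exact h0
        · exfalso; nlinarith
      · simp
    · rw [if_neg h]
      have hz := hterm j i
      have hc := stmt17_cos j i (Ne.symm h)
      rw [hθ] at hz
      simp only at hz
      rcases mul_eq_zero.mp (by nlinarith : d i j * (1 - Real.cos (π * j / n - π * i / n)^2) = 0) with h0 | h0
      · exact h0
      · exfalso; nlinarith
  tfae_have 3 → 1 := by
    intro hdiag
    intro k A hA
    obtain ⟨C, hC⟩ : ∃ C : Matrix (Fin k × Fin n) (Fin k × Fin n) ℂ, A = Cᴴ * C := by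
      open scoped MatrixOrder Matrix.Norms.L2Operator in
      obtain ⟨B, hB⟩ := CStarAlgebra.nonneg_iff_eq_star_mul_self.mp hA.nonneg
      exact ⟨B, hB⟩
    have hB : ∀ u v : Fin k × Fin n,
        (Matrix.of fun u v : Fin k × Fin n =>
          L (Matrix.of fun a b => A (u.1, a) (v.1, b)) u.2 v.2) u v
        = (if u.2 = v.2 then (n:ℂ) * A (u.1, u.2) (v.1, u.2) else 0) - A (u.1,u.2) (v.1,v.2) := by
      intro u v
      have hsum : ∀ j : Fin n, (∑ i, (d i j : ℂ) * A (u.1, i) (v.1, i)) = (n:ℂ) * A (u.1,j) (v.1,j) := by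
        intro j
        rw [Finset.sum_eq_single j]
        · rw [hdiag]; simp
        · intro i _ hij; rw [hdiag]; simp [hij]
        · simp
      simp only [Matrix.of_apply, hL, Matrix.sub_apply, Matrix.diagonal_apply, hsum, Matrix.of_apply]
    refine Matrix.PosSemidef.of_dotProduct_mulVec_nonneg ?_ ?_
    · -- Hermitian
      have hAh := hA.1
      show _ = _
      ext p q
      simp only [Matrix.conjTranspose_apply, hB, star_sub, apply_ite (star : ℂ → ℂ), star_mul',
        star_natCast, star_zero, hAh.apply]
      rcases eq_or_ne p.2 q.2 with h | h
      · obtain ⟨p1, p2⟩ := p; obtain ⟨q1, q2⟩ := q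
        simp only at h; subst h
        simp
      · simp [h, Ne.symm h]
    · intro x
      set y : Fin n → (Fin k × Fin n → ℂ) := fun j p => if p.2 = j then x p else 0 with hy
      have key : ∀ p q : Fin k × Fin n,
          (∑ j, star (y j p) * A p q * (y j q)) = if p.2 = q.2 then star (x p) * A p q * x q else 0 := by
        rintro ⟨p1, p2⟩ ⟨q1, q2⟩
        rcases eq_or_ne (p1, p2).2 (q1, q2).2 with h | h
        · simp only at h; subst h
          rw [if_pos rfl, Finset.sum_eq_single p2]
          · simp [hy]
          · intro j _ hj
            have : y j (p1, p2) = 0 := by simp [hy, Ne.symm hj]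
            simp [this]
          · simp
        · rw [if_neg h]
          apply Finset.sum_eq_zero
          intro j _
          simp only at h
          by_cases h1 : p2 = j
          · have h2 : q2 ≠ j := fun hh => h (h1.trans hh.symm)
            simp [hy, h1, h2]
          · simp [hy, h1]
      have main : ∀ p q : Fin k × Fin n, star (x p) *
          ((Matrix.of fun u v : Fin k × Fin n =>
            L (Matrix.of fun a b => A (u.1, a) (v.1, b)) u.2 v.2) p q * x q)
          = (n:ℂ) * (∑ j, star (y j p) * A p q * (y j q)) - star (x p) * (A p q * x q) := by
        rintro ⟨p1, p2⟩ ⟨q1, q2⟩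
        rw [key, hB]
        rcases eq_or_ne (p1, p2).2 (q1, q2).2 with h | h
        · simp only at h; subst h
          rw [if_pos rfl, if_pos rfl]
          ring
        · rw [if_neg h, if_neg h]; ring
      have expand : star x ⬝ᵥ (Matrix.of fun u v : Fin k × Fin n =>
              L (Matrix.of fun a b => A (u.1, a) (v.1, b)) u.2 v.2) *ᵥ x
          = (n:ℂ) * (∑ j, star (y j) ⬝ᵥ A *ᵥ (y j)) - star x ⬝ᵥ A *ᵥ x := by
        have l1 : star x ⬝ᵥ (Matrix.of fun u v : Fin k × Fin n =>
              L (Matrix.of fun a b => A (u.1, a) (v.1, b)) u.2 v.2) *ᵥ x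
            = ∑ p, ∑ q, star (x p) * ((Matrix.of fun u v : Fin k × Fin n =>
              L (Matrix.of fun a b => A (u.1, a) (v.1, b)) u.2 v.2) p q * x q) := by
          simp [dotProduct, mulVec, Finset.mul_sum]
        have l2 : ∀ j, star (y j) ⬝ᵥ A *ᵥ (y j)
            = ∑ p, ∑ q, star (y j p) * A p q * (y j q) := by
          intro j; simp [dotProduct, mulVec, Finset.mul_sum, mul_assoc]
        have l3 : star x ⬝ᵥ A *ᵥ x = ∑ p, ∑ q, star (x p) * (A p q * x q) := by
          simp [dotProduct, mulVec, Finset.mul_sum]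
        rw [l1, l3]
        simp only [l2, main]
        simp only [Finset.sum_sub_distrib]
        congr 1
        simp only [← Finset.mul_sum]
        congr 1
        rw [stmt17_sum3]
      show 0 ≤ _
      rw [expand]
      have quad : ∀ z : Fin k × Fin n → ℂ, star z ⬝ᵥ A *ᵥ z
          = ((∑ i, Complex.normSq ((C *ᵥ z) i) : ℝ) : ℂ) := by
        intro z
        rw [hC, ← mulVec_mulVec, dotProduct_mulVec, ← star_mulVec]
        simp only [dotProduct, Pi.star_apply]
        push_cast
        apply Finset.sum_congr rfl
        intro i _
        rw [Complex.star_def, ← Complex.normSq_eq_conj_mul_self]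
      have hxy : C *ᵥ x = ∑ j, C *ᵥ (y j) := by
        have : x = ∑ j, y j := by
          funext p
          rw [Finset.sum_apply]
          simp [hy]
        rw [this]
        exact map_sum (Matrix.mulVecLin C) _ _
      simp only [quad]
      rw [hxy]
      set z : Fin n → (Fin k × Fin n → ℂ) := fun j => C *ᵥ (y j) with hz
      have hge : (∑ i, Complex.normSq ((∑ j, z j) i)) ≤ n * ∑ j, (∑ i, Complex.normSq (z j i)) := by
        have : ∀ i, Complex.normSq ((∑ j, z j) i) ≤ n * ∑ j, Complex.normSq (z j i) := by
          intro i
          have := stmt17_cs (fun j => z j i)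
          simpa [Finset.sum_apply] using this
        calc ∑ i, Complex.normSq ((∑ j, z j) i) ≤ ∑ i, (n * ∑ j, Complex.normSq (z j i)) :=
              Finset.sum_le_sum (fun i _ => this i)
          _ = n * ∑ j, (∑ i, Complex.normSq (z j i)) := by
              rw [← Finset.mul_sum]; rw [Finset.sum_comm]
      have cast_eq : (n:ℂ) * (∑ j, ((∑ i, Complex.normSq (z j i) : ℝ) : ℂ))
          - ((∑ i, Complex.normSq ((∑ j, z j) i) : ℝ) : ℂ)
          = (((n * ∑ j, (∑ i, Complex.normSq (z j i)) - ∑ i, Complex.normSq ((∑ j, z j) i) : ℝ)) : ℂ) := by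
        push_cast; ring
      rw [cast_eq, Complex.zero_le_real]
      linarith
  tfae_finish
end

section
/- Let n be even and π a permutation of {1,…,n} with π² = id. Then the D-type positive map Φ = Φ_{1,π} with D = (n−1)I_n + P_π is decomposable: its Choi matrix C(Φ) can be written as C_1 + C_2 where C_1 is positive semidefinite and the partial transpose C_2^{T_2} of C_2 is positive semidefinite. -/
open Matrix ComplexOrder Finset Complex

private lemma csC18 {n : ℕ} (z : Fin n → ℂ) :
    normSq (∑ i, z i) ≤ (n : ℝ) * ∑ i, normSq (z i) := by
  have hre := sq_sum_le_card_mul_sum_sq (s := (univ : Finset (Fin n))) (f := fun i => (z i).re)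
  have him := sq_sum_le_card_mul_sum_sq (s := (univ : Finset (Fin n))) (f := fun i => (z i).im)
  simp only [card_univ, Fintype.card_fin] at hre him
  have h1 : (∑ i, z i).re = ∑ i, (z i).re := by simp [Complex.re_sum]
  have h2 : (∑ i, z i).im = ∑ i, (z i).im := by simp [Complex.im_sum]
  simp only [normSq_apply, h1, h2]
  have h3 : ∑ i, ((z i).re * (z i).re + (z i).im * (z i).im)
      = ∑ i, (z i).re ^ 2 + ∑ i, (z i).im ^ 2 := by
    rw [← Finset.sum_add_distrib]; congr 1; ext i; ring
  calc (∑ i, (z i).re) * (∑ i, (z i).re) + (∑ i, (z i).im) * (∑ i, (z i).im)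
      = (∑ i, (z i).re) ^ 2 + (∑ i, (z i).im) ^ 2 := by ring
    _ ≤ (n : ℝ) * ∑ i, (z i).re ^ 2 + (n : ℝ) * ∑ i, (z i).im ^ 2 := by linarith
    _ = (n : ℝ) * ∑ i, ((z i).re * (z i).re + (z i).im * (z i).im) := by rw [h3]; ring

open Matrix ComplexOrder in
/-- for even `n` and an involutive permutation `π`, the positive
`D`-type map `Φ_{1,π}` (with `D = (n−1)I + P_π`) is decomposable: its Choi
matrix is `C₁ + C₂` with `C₁ ≥ 0` and `C₂^{T₂} ≥ 0`. -/
theorem stmt_18 {n : ℕ} (hn : Even n) (π : Equiv.Perm (Fin n))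
    (hπ : π * π = 1)
    (Φ : Matrix (Fin n) (Fin n) ℂ → Matrix (Fin n) (Fin n) ℂ)
    (hΦ : ∀ A, Φ A = Matrix.diagonal (fun j => ∑ i,
        (((if i = j then (n : ℝ) - 1 else 0) +
          (if i = π j then 1 else 0) : ℝ) : ℂ) * A i i) - A) :
    ∃ C₁ C₂ : Matrix (Fin n × Fin n) (Fin n × Fin n) ℂ,
      (Matrix.of fun p q : Fin n × Fin n =>
          Φ (Matrix.single p.1 q.1 1) p.2 q.2) = C₁ + C₂ ∧
      C₁.PosSemidef ∧
      (Matrix.of fun p q : Fin n × Fin n =>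
          C₂ (p.1, q.2) (q.1, p.2)).PosSemidef := by
  have hππ : ∀ i, π (π i) = i := fun i => by
    have := congrArg (fun e => e i) hπ
    simpa [Equiv.Perm.mul_apply] using this
  have hn2 : n = 0 ∨ 2 ≤ n := by
    obtain ⟨m, rfl⟩ := hn; omega
  -- the small matrix
  set m : Fin n → Fin n → ℂ := fun i j =>
    (if i = j then (n : ℂ) - 1 else 0) + (if j = π i then 1 else 0) - 1 with hm
  set C₁ : Matrix (Fin n × Fin n) (Fin n × Fin n) ℂ :=
    Matrix.of (fun p q => if p.2 = p.1 ∧ q.2 = q.1 then m p.1 q.1 else 0) with hC1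
  set Ch : Matrix (Fin n × Fin n) (Fin n × Fin n) ℂ :=
    Matrix.of (fun p q : Fin n × Fin n =>
      Φ (Matrix.single p.1 q.1 1) p.2 q.2) with hCh
  -- explicit entries of the Choi matrix
  have hChE : ∀ p q : Fin n × Fin n, Ch p q =
      (if p.1 = q.1 ∧ p.2 = q.2 then
        ((if p.1 = p.2 then (n:ℂ) - 1 else 0) + (if p.1 = π p.2 then 1 else 0)) else 0)
      - (if p.1 = p.2 ∧ q.1 = q.2 then 1 else 0) := by
    rintro ⟨i, k⟩ ⟨j, l⟩
    have hA : ∀ a b : Fin n, (Matrix.single i j (1:ℂ)) a b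
        = if i = a ∧ j = b then 1 else 0 := by
      intro a b; rfl
    simp only [hCh, Matrix.of_apply, hΦ, Matrix.sub_apply, Matrix.diagonal_apply, hA]
    have hsum : (∑ a, (((if a = k then (n : ℝ) - 1 else 0) +
          (if a = π k then 1 else 0) : ℝ) : ℂ) * (if i = a ∧ j = a then 1 else 0))
        = if i = j then (((if i = k then (n : ℝ) - 1 else 0) +
          (if i = π k then 1 else 0) : ℝ) : ℂ) else 0 := by
      by_cases hij : i = j
      · subst hij
        rw [Finset.sum_eq_single i]
        · simp
        · intro b _ hb; simp [Ne.symm hb]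
        · simp
      · rw [if_neg hij]
        refine Finset.sum_eq_zero fun a _ => ?_
        have : ¬ (i = a ∧ j = a) := by rintro ⟨rfl, rfl⟩; exact hij rfl
        simp [this]
    rw [hsum]
    congr 1
    · by_cases hij : i = j <;> by_cases hkl : k = l <;>
        simp only [hij, hkl, if_true, if_false, and_true, true_and, and_false, false_and,
          if_neg, ite_true, ite_false] <;>
        first
          | (push_cast [apply_ite Complex.ofReal]; try ring)
          | (simp [hij, hkl])
  set Nmat : Matrix (Fin n × Fin n) (Fin n × Fin n) ℂ :=
    Matrix.of (fun p q =>
      (if p.2 = π p.1 ∧ p.1 ≠ p.2 ∧ q = p then 1 else 0)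
      - (if p.2 = π p.1 ∧ p.1 ≠ p.2 ∧ q.1 = p.2 ∧ q.2 = p.1 then 1 else 0)) with hNm
  have hC1herm : C₁.IsHermitian := by
    have hmrs : ∀ i j : Fin n, (starRingEnd ℂ) (m i j) = m j i := by
      intro i j
      by_cases hij : i = j
      · subst hij
        simp [hm, apply_ite (starRingEnd ℂ)]
      · by_cases hpi : j = π i
        · have h2 : i = π j := by rw [hpi, hππ]
          rw [hm]; dsimp only
          rw [if_neg hij, if_pos hpi, if_neg (Ne.symm hij), if_pos h2]
          simp
        · have h2 : ¬ i = π j := fun hc => hpi (by rw [hc, hππ])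
          rw [hm]; dsimp only
          rw [if_neg hij, if_neg hpi, if_neg (Ne.symm hij), if_neg h2]
          simp
    ext ⟨i, k⟩ ⟨j, l⟩
    simp only [conjTranspose_apply, hC1, Matrix.of_apply]
    by_cases h : k = i ∧ l = j
    · rw [if_pos ⟨h.2, h.1⟩, if_pos h]
      exact hmrs j i
    · have h' : ¬ (l = j ∧ k = i) := fun hc => h ⟨hc.2, hc.1⟩
      rw [if_neg h', if_neg h, star_zero]
  refine ⟨C₁, Ch - C₁, by abel, ?_, ?_⟩
  · -- C₁ is PSD
    refine Matrix.PosSemidef.of_dotProduct_mulVec_nonneg hC1herm fun x => ?_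
    set y : Fin n → ℂ := fun i => x (i, i) with hy
    have hform : star x ⬝ᵥ C₁ *ᵥ x
        = ((n:ℂ) - 1) * (∑ i, star (y i) * y i) + (∑ i, star (y i) * y (π i))
          - (∑ i, star (y i)) * (∑ j, y j) := by
      have hmv : ∀ i k : Fin n, (C₁ *ᵥ x) (i, k)
          = if k = i then ∑ j, m i j * y j else 0 := by
        intro i k
        rw [mulVec, dotProduct, Fintype.sum_prod_type]
        by_cases hk : k = i
        · rw [if_pos hk]
          refine Finset.sum_congr rfl fun j _ => ?_
          rw [Finset.sum_eq_single j]
          · simp [hC1, hk, hy]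
          · intro l _ hl; simp [hC1, hl]
          · simp
        · rw [if_neg hk]
          refine Finset.sum_eq_zero fun j _ => Finset.sum_eq_zero fun l _ => ?_
          simp [hC1, hk]
      have step1 : star x ⬝ᵥ C₁ *ᵥ x = ∑ i, star (y i) * ∑ j, m i j * y j := by
        rw [dotProduct, Fintype.sum_prod_type]
        refine Finset.sum_congr rfl fun i _ => ?_
        rw [Finset.sum_eq_single i]
        · rw [hmv, if_pos rfl]; rfl
        · intro k _ hk; rw [hmv, if_neg hk]; simp
        · simp
      have hper : ∀ i, star (y i) * ∑ j, m i j * y j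
          = ((n:ℂ)-1) * (star (y i) * y i) + star (y i) * y (π i)
            - star (y i) * ∑ j, y j := by
        intro i
        rw [Finset.mul_sum]
        have h1 : ∀ j, star (y i) * (m i j * y j)
            = ((if i = j then ((n:ℂ)-1) * (star (y i) * y j) else 0)
              + (if j = π i then star (y i) * y j else 0)) - star (y i) * y j := by
          intro j; rw [hm]; dsimp only; split_ifs <;> ring
        rw [Finset.sum_congr rfl fun j _ => h1 j, Finset.sum_sub_distrib,
          Finset.sum_add_distrib, Finset.sum_ite_eq, Finset.sum_ite_eq',
          Finset.mul_sum]
        simp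
      rw [step1, Finset.sum_congr rfl fun i _ => hper i, Finset.sum_sub_distrib,
        Finset.sum_add_distrib, ← Finset.mul_sum, ← Finset.sum_mul]
    have e1 : (∑ i, star (y i) * y i) = ((∑ i, Complex.normSq (y i) : ℝ) : ℂ) := by
      rw [Complex.ofReal_sum]
      exact Finset.sum_congr rfl fun i _ => by
        rw [Complex.normSq_eq_conj_mul_self]; rfl
    have hswap : ∑ i, star (y (π i)) * y i = ∑ i, star (y i) * y (π i) := by
      calc ∑ i, star (y (π i)) * y i = ∑ i, star (y (π i)) * y (π (π i)) := by
            simp [hππ]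
        _ = ∑ i, star (y i) * y (π i) :=
            Equiv.sum_comp π (fun i => star (y i) * y (π i))
    have e2 : ((∑ i, Complex.normSq (y i + y (π i)) : ℝ) : ℂ)
        = 2 * ((∑ i, Complex.normSq (y i) : ℝ) : ℂ)
          + 2 * ∑ i, star (y i) * y (π i) := by
      rw [Complex.ofReal_sum]
      have hterm : ∀ i : Fin n, ((Complex.normSq (y i + y (π i)) : ℝ) : ℂ)
          = star (y i) * y i + star (y i) * y (π i) + star (y (π i)) * y i
            + star (y (π i)) * y (π i) := by
        intro i
        rw [Complex.normSq_eq_conj_mul_self]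
        show (starRingEnd ℂ) (y i + y (π i)) * (y i + y (π i)) = _
        rw [map_add]
        show (star (y i) + star (y (π i))) * (y i + y (π i)) = _
        ring
      rw [Finset.sum_congr rfl fun i _ => hterm i]
      rw [Finset.sum_add_distrib, Finset.sum_add_distrib, Finset.sum_add_distrib, hswap]
      have h4 : ∑ i, star (y (π i)) * y (π i) = ∑ i, star (y i) * y i :=
        Equiv.sum_comp π (fun i => star (y i) * y i)
      rw [h4, e1]
      ring
    have e2' : (∑ i, star (y i) * y (π i))
        = (((∑ i, Complex.normSq (y i + y (π i)))/2 - ∑ i, Complex.normSq (y i) : ℝ) : ℂ) := by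
      push_cast at e2 ⊢
      linear_combination (-1/2 : ℂ) * e2
    have e3 : (∑ i, star (y i)) * (∑ j, y j)
        = ((Complex.normSq (∑ i, y i) : ℝ) : ℂ) := by
      rw [Complex.normSq_eq_conj_mul_self, ← star_sum]; rfl
    have hfin : star x ⬝ᵥ C₁ *ᵥ x
        = ((((n:ℝ)-2) * (∑ i, Complex.normSq (y i))
            + (∑ i, Complex.normSq (y i + y (π i)))/2
            - Complex.normSq (∑ i, y i) : ℝ) : ℂ) := by
      rw [hform, e1, e2', e3]
      push_cast
      ring
    rw [hfin, Complex.zero_le_real]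
    rcases hn2 with h0 | h2
    · subst h0
      simp
    · have hA0 : (0:ℝ) ≤ ∑ i, Complex.normSq (y i) :=
        Finset.sum_nonneg fun i _ => Complex.normSq_nonneg _
      have hsum2 : ∑ i, (y i + y (π i)) = 2 * ∑ i, y i := by
        rw [Finset.sum_add_distrib, Equiv.sum_comp π y]
        ring
      have c1 : 4 * Complex.normSq (∑ i, y i)
          ≤ (n:ℝ) * ∑ i, Complex.normSq (y i + y (π i)) := by
        have := csC18 (fun i => y i + y (π i))
        rw [hsum2] at this
        have h4 : Complex.normSq (2 * ∑ i, y i) = 4 * Complex.normSq (∑ i, y i) := by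
          rw [Complex.normSq_mul]
          norm_num [Complex.normSq_apply]
        linarith [this, h4.symm.le]
      have c2 : (∑ i, Complex.normSq (y i + y (π i)))
          ≤ 4 * ∑ i, Complex.normSq (y i) := by
        have hpt : ∀ i : Fin n, Complex.normSq (y i + y (π i))
            ≤ 2 * Complex.normSq (y i) + 2 * Complex.normSq (y (π i)) := by
          intro i
          simp only [Complex.normSq_apply, Complex.add_re, Complex.add_im]
          nlinarith [sq_nonneg ((y i).re - (y (π i)).re), sq_nonneg ((y i).im - (y (π i)).im)]
        calc (∑ i, Complex.normSq (y i + y (π i)))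
            ≤ ∑ i, (2 * Complex.normSq (y i) + 2 * Complex.normSq (y (π i))) :=
              Finset.sum_le_sum fun i _ => hpt i
          _ = 4 * ∑ i, Complex.normSq (y i) := by
              rw [Finset.sum_add_distrib, ← Finset.mul_sum, ← Finset.mul_sum,
                Equiv.sum_comp π (fun i => Complex.normSq (y i))]
              ring
      have hn2' : (2:ℝ) ≤ (n:ℝ) := by exact_mod_cast h2
      nlinarith [mul_nonneg (sub_nonneg.mpr hn2') (by linarith : (0:ℝ) ≤ 4 * ∑ i, Complex.normSq (y i) - ∑ i, Complex.normSq (y i + y (π i)))]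
  · -- partial transpose of C₂ is PSD
    have hNeq : (Matrix.of fun p q : Fin n × Fin n =>
        (Ch - C₁) (p.1, q.2) (q.1, p.2)) = Nmat := by
      ext ⟨i, k⟩ ⟨j, l⟩
      simp only [Matrix.of_apply, Matrix.sub_apply, hNm]
      rw [hChE]
      simp only [hC1, Matrix.of_apply, hm]
      by_cases hil : i = l
      · subst hil
        by_cases hjk : j = k
        · subst hjk
          by_cases hij : i = j
          · subst hij
            by_cases hfix : i = π i
            · simp only [← hfix, if_pos rfl, and_self, ne_eq, not_true_eq_false,
                false_and, and_false, if_false, if_true]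
              ring
            · simp [hfix]
          · by_cases hjpi : j = π i
            · have hnfix : ¬ i = π i := fun h => hij (h.trans hjpi.symm)
              simp [hjpi, hnfix, Ne.symm hnfix, hππ, Prod.mk.injEq]
            · simp [hij, Ne.symm hij, hjpi, Prod.mk.injEq]
        · have h1 : ¬ (i = j ∧ i = k) := by rintro ⟨rfl, rfl⟩; exact hjk rfl
          have h2 : ¬ (j = i ∧ i = k) := by rintro ⟨rfl, rfl⟩; exact hjk rfl
          simp [hjk, Ne.symm hjk, h1, h2, Prod.mk.injEq]
      · by_cases hij : i = j
        · subst hij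
          by_cases hlk : l = k
          · subst hlk
            by_cases hpi : l = π i
            · have hnfix : ¬ i = π i := fun h => hil (h.trans hpi.symm)
              simp [hpi, hππ, hnfix, Ne.symm hnfix, Prod.mk.injEq]
            · have h3 : ¬ i = π l := fun hc => hpi (by rw [hc, hππ])
              simp [hil, Ne.symm hil, hpi, h3, Prod.mk.injEq]
          · simp [hlk, hil, Ne.symm hil, Prod.mk.injEq]
        · simp [hij, Ne.symm hij, hil, Ne.symm hil, Prod.mk.injEq]
    rw [hNeq]
    have hChherm : Ch.IsHermitian := by
      ext ⟨i, k⟩ ⟨j, l⟩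
      simp only [conjTranspose_apply]
      rw [hChE, hChE]
      simp only [Complex.star_def, map_sub, apply_ite (starRingEnd ℂ), map_add,
        map_natCast, _root_.map_one, _root_.map_zero]
      by_cases hij : i = j
      · subst hij
        by_cases hkl : k = l
        · subst hkl
          simp
        · simp [hkl, Ne.symm hkl, and_comm]
      · simp [hij, Ne.symm hij, and_comm]
    have hXherm : (Ch - C₁).IsHermitian := hChherm.sub hC1herm
    have hNherm : Nmat.IsHermitian := by
      rw [← hNeq]
      ext ⟨i, k⟩ ⟨j, l⟩
      simp only [conjTranspose_apply, Matrix.of_apply]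
      have := congrFun (congrFun hXherm (i, l)) (j, k)
      simpa [conjTranspose_apply] using this
    refine Matrix.PosSemidef.of_dotProduct_mulVec_nonneg hNherm fun x => ?_
    have hmv : ∀ i k : Fin n, (Nmat *ᵥ x) (i, k)
        = if k = π i ∧ ¬ i = k then x (i,k) - x (k,i) else 0 := by
      intro i k
      rw [mulVec, dotProduct]
      by_cases h : k = π i ∧ ¬ i = k
      · obtain ⟨h1, h2⟩ := h
        subst h1
        rw [if_pos ⟨rfl, h2⟩]
        have hval : ∀ q : Fin n × Fin n, Nmat (i, π i) q * x q
            = (if q = (i, π i) then x q else 0) - (if q = (π i, i) then x q else 0) := by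
          intro q
          simp only [hNm, Matrix.of_apply, ne_eq]
          by_cases hq1 : q = (i, π i)
          · subst hq1
            have hc2 : ¬ ((i : Fin n) = π i ∧ π i = i) := fun hc => h2 hc.1
            simp [h2, hc2, Prod.mk.injEq]
          · by_cases hq2 : q = (π i, i)
            · subst hq2
              have hc1 : ¬ (((π i, i) : Fin n × Fin n) = (i, π i)) := by
                simp only [Prod.mk.injEq]
                exact fun hc => h2 hc.1.symm
              simp [h2, hc1, Prod.mk.injEq]
            · have hc2 : ¬ (q.1 = π i ∧ q.2 = i) := fun hc => hq2 (Prod.ext hc.1 hc.2)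
              simp [hq1, hq2, hc2]
        rw [Finset.sum_congr rfl fun q _ => hval q, Finset.sum_sub_distrib,
          Finset.sum_ite_eq', Finset.sum_ite_eq']
        simp
      · rw [if_neg h]
        refine Finset.sum_eq_zero fun q _ => ?_
        have h1 : ¬ (k = π i ∧ ¬ i = k ∧ q = (i,k)) := fun hc => h ⟨hc.1, hc.2.1⟩
        have h2 : ¬ (k = π i ∧ ¬ i = k ∧ q.1 = k ∧ q.2 = i) := fun hc => h ⟨hc.1, hc.2.1⟩
        simp only [hNm, Matrix.of_apply, ne_eq]
        rw [if_neg h1, if_neg h2]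
        ring
    have hredN : star x ⬝ᵥ Nmat *ᵥ x
        = ∑ i, (if i = π i then 0
            else star (x (i, π i)) * (x (i, π i) - x (π i, i))) := by
      rw [dotProduct, Fintype.sum_prod_type]
      refine Finset.sum_congr rfl fun i _ => ?_
      rw [Finset.sum_eq_single (π i)]
      · rw [hmv]
        by_cases hfix : i = π i
        · rw [if_neg (fun hc => hc.2 hfix), if_pos hfix, mul_zero]
        · rw [if_pos ⟨rfl, hfix⟩, if_neg hfix]
          rfl
      · intro k _ hk
        rw [hmv, if_neg (fun hc => hk hc.1)]
        simp
      · simp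
    set g : Fin n → ℂ := fun i => if i = π i then 0
        else star (x (i, π i)) * (x (i, π i) - x (π i, i)) with hg
    have hg2 : ∀ i, g i + g (π i)
        = if i = π i then 0
          else (x (i, π i) - x (π i, i)) * star (x (i, π i) - x (π i, i)) := by
      intro i
      by_cases hfix : i = π i
      · rw [hg]; dsimp only
        rw [if_pos hfix, if_pos hfix, ← hfix, if_pos hfix]
        simp
      · have h2 : ¬ π i = π (π i) := by
          rw [hππ]; exact fun hc => hfix hc.symm
        rw [hg]; dsimp only
        rw [if_neg hfix, if_neg h2, if_neg hfix, hππ]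
        rw [star_sub]
        ring
    have hdouble : (2:ℂ) * (star x ⬝ᵥ Nmat *ᵥ x)
        = ∑ i, (if i = π i then 0
            else ((Complex.normSq (x (i, π i) - x (π i, i)) : ℝ) : ℂ)) := by
      rw [hredN]
      have hco : ∑ i, g (π i) = ∑ i, g i := Equiv.sum_comp π g
      have : (2:ℂ) * (∑ i, g i) = ∑ i, (g i + g (π i)) := by
        rw [Finset.sum_add_distrib, hco]; ring
      rw [this, Finset.sum_congr rfl fun i _ => hg2 i]
      refine Finset.sum_congr rfl fun i _ => ?_
      by_cases hfix : i = π i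
      · rw [if_pos hfix, if_pos hfix]
      · rw [if_neg hfix, if_neg hfix]
        rw [Complex.normSq_eq_conj_mul_self]
        rw [Complex.star_def]
        ring
    have h2T : (0:ℂ) ≤ 2 * (star x ⬝ᵥ Nmat *ᵥ x) := by
      rw [hdouble]
      refine Finset.sum_nonneg fun i _ => ?_
      by_cases hfix : i = π i
      · rw [if_pos hfix]
      · rw [if_neg hfix]
        exact Complex.zero_le_real.mpr (Complex.normSq_nonneg _)
    have hhalf : (0:ℂ) ≤ ((1/2 : ℝ) : ℂ) := Complex.zero_le_real.mpr (by norm_num)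
    have hTeq : star x ⬝ᵥ Nmat *ᵥ x = ((1/2 : ℝ) : ℂ) * (2 * (star x ⬝ᵥ Nmat *ᵥ x)) := by
      push_cast; ring
    rw [hTeq]
    exact mul_nonneg hhalf h2T
end
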